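/- arXiv:1910.12835 — 4 statements merged into one kernel-verified Lean document; each statement's English description precedes it below -/
import Mathlib

section
/- If H is an (r,η)-near-regular k-uniform hypergraph with η ∈ [0,1/3], then H is (r-1,η)-near-regular. -/
open Finset

/-- If `H` is a `k`-uniform `(r,η)`-near-regular hypergraph with `η ∈ [0,1/3]`
(every `r`-set has degree within a factor `(1 ± η)` of the average `r`-degree
`d̄_r = e(H)·C(k,r)/C(N,r)`), then `H` is `(r-1,η)`-near-regular. -/
theorem near_regular_inherit (N k r : ℕ) (hr : 1 ≤ r) (hrk : r ≤ k)
    (η : ℝ) (hη0 : 0 ≤ η) (hη1 : η ≤ 1 / 3)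
    (H : Finset (Finset (Fin N))) (huni : ∀ f ∈ H, f.card = k)
    (hreg : ∀ S : Finset (Fin N), S.card = r →
      (1 - η) * ((H.card : ℝ) * (k.choose r) / (N.choose r))
          ≤ ((H.filter (fun f => S ⊆ f)).card : ℝ) ∧
      ((H.filter (fun f => S ⊆ f)).card : ℝ)
          ≤ (1 + η) * ((H.card : ℝ) * (k.choose r) / (N.choose r))) :
    ∀ S : Finset (Fin N), S.card = r - 1 →
      (1 - η) * ((H.card : ℝ) * (k.choose (r - 1)) / (N.choose (r - 1)))
          ≤ ((H.filter (fun f => S ⊆ f)).card : ℝ) ∧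
      ((H.filter (fun f => S ⊆ f)).card : ℝ)
          ≤ (1 + η) * ((H.card : ℝ) * (k.choose (r - 1)) / (N.choose (r - 1))) := by
  intro S hS
  by_cases hkN : k ≤ N
  · have hrN : r ≤ N := hrk.trans hkN
    -- key double counting identity
    have key : ∑ v ∈ Sᶜ, (H.filter (fun f => insert v S ⊆ f)).card
        = (k - (r - 1)) * (H.filter (fun f => S ⊆ f)).card := by
      have : ∀ v, (H.filter (fun f => insert v S ⊆ f)).card
          = ∑ f ∈ H, if insert v S ⊆ f then 1 else 0 := by
        intro v; rw [Finset.card_filter]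
      simp_rw [this]
      rw [Finset.sum_comm]
      have inner : ∀ f ∈ H, (∑ v ∈ Sᶜ, if insert v S ⊆ f then 1 else 0)
          = if S ⊆ f then k - (r - 1) else 0 := by
        intro f hf
        by_cases hSf : S ⊆ f
        · rw [if_pos hSf]
          have : ∀ v ∈ Sᶜ, (if insert v S ⊆ f then 1 else 0) = if v ∈ f \ S then 1 else 0 := by
            intro v hv
            simp only [Finset.mem_compl] at hv
            by_cases hvf : v ∈ f
            · rw [if_pos (Finset.insert_subset hvf hSf), if_pos (Finset.mem_sdiff.2 ⟨hvf, hv⟩)]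
            · rw [if_neg, if_neg]
              · simp [hvf]
              · intro h; exact hvf (h (Finset.mem_insert_self v S))
          rw [Finset.sum_congr rfl this]
          have hsub : f \ S ⊆ Sᶜ := by
            intro v hv
            simp only [Finset.mem_sdiff] at hv
            exact Finset.mem_compl.2 hv.2
          rw [Finset.sum_ite_mem, Finset.inter_eq_right.2 hsub, Finset.sum_const,
            Finset.card_sdiff_of_subset hSf, huni f hf, hS, smul_eq_mul, mul_one]
        · rw [if_neg hSf]
          apply Finset.sum_eq_zero
          intro v _
          rw [if_neg]
          intro h
          exact hSf ((Finset.subset_insert v S).trans h)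
      rw [Finset.sum_congr rfl inner, ← Finset.sum_filter, Finset.sum_const,
        smul_eq_mul, mul_comm]
    -- set up real quantities
    have hr1' : r - 1 ≤ N := by omega
    have hb : (0:ℝ) < (N.choose r : ℝ) := by exact_mod_cast Nat.choose_pos hrN
    have hb' : (0:ℝ) < (N.choose (r-1) : ℝ) := by exact_mod_cast Nat.choose_pos hr1'
    have hKnat : 1 ≤ k - (r - 1) := by omega
    have hK : (0:ℝ) < ((k - (r-1) : ℕ) : ℝ) := by exact_mod_cast hKnat
    have hcompl : Sᶜ.card = N - (r - 1) := by
      rw [Finset.card_compl, hS]; simp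
    -- the binomial identity
    have hr1 : r - 1 + 1 = r := by omega
    have h1 := Nat.choose_succ_right_eq N (r-1)
    have h2 := Nat.choose_succ_right_eq k (r-1)
    rw [hr1] at h1 h2
    have hidN : k.choose r * ((N - (r-1)) * N.choose (r-1))
        = N.choose r * ((k - (r-1)) * k.choose (r-1)) := by
      calc k.choose r * ((N - (r-1)) * N.choose (r-1))
          = (N.choose (r-1) * (N - (r-1))) * k.choose r := by ring
        _ = (N.choose r * r) * k.choose r := by rw [h1]
        _ = N.choose r * (k.choose r * r) := by ring
        _ = N.choose r * (k.choose (r-1) * (k - (r-1))) := by rw [h2]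
        _ = N.choose r * ((k - (r-1)) * k.choose (r-1)) := by ring
    have hid : ((k.choose r : ℝ)) * (((N - (r-1) : ℕ) : ℝ) * (N.choose (r-1) : ℝ))
        = (N.choose r : ℝ) * (((k - (r-1) : ℕ) : ℝ) * (k.choose (r-1) : ℝ)) := by
      exact_mod_cast congrArg (Nat.cast : ℕ → ℝ) hidN
    have keyR := congrArg (Nat.cast : ℕ → ℝ) key
    push_cast at keyR
    have hcard : ∀ v ∈ Sᶜ, (insert v S).card = r := by
      intro v hv
      rw [Finset.card_insert_of_notMem (Finset.mem_compl.1 hv), hS, hr1]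
    set e : ℝ := (H.card : ℝ) with he
    set d : ℝ := ((H.filter (fun f => S ⊆ f)).card : ℝ) with hd
    have hsum_low : ((N - (r-1) : ℕ) : ℝ) * ((1-η) * (e * (k.choose r) / (N.choose r)))
        ≤ ((k - (r-1) : ℕ) : ℝ) * d := by
      rw [← keyR, ← hcompl]
      have := Finset.card_nsmul_le_sum Sᶜ
        (fun v => ((H.filter (fun f => insert v S ⊆ f)).card : ℝ))
        ((1-η) * (e * (k.choose r) / (N.choose r)))
        (fun v hv => (hreg _ (hcard v hv)).1)
      simpa [nsmul_eq_mul] using this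
    have hsum_high : ((k - (r-1) : ℕ) : ℝ) * d
        ≤ ((N - (r-1) : ℕ) : ℝ) * ((1+η) * (e * (k.choose r) / (N.choose r))) := by
      rw [← keyR, ← hcompl]
      have := Finset.sum_le_card_nsmul Sᶜ
        (fun v => ((H.filter (fun f => insert v S ⊆ f)).card : ℝ))
        ((1+η) * (e * (k.choose r) / (N.choose r)))
        (fun v hv => (hreg _ (hcard v hv)).2)
      simpa [nsmul_eq_mul] using this
    have hKb : (0:ℝ) < ((k - (r-1) : ℕ) : ℝ) * (N.choose r : ℝ) := by positivity
    constructor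
    · rw [show (1-η) * (e * (k.choose (r-1) : ℝ) / (N.choose (r-1) : ℝ))
          = (1-η) * (e * (k.choose (r-1) : ℝ)) / (N.choose (r-1) : ℝ) from by ring,
        div_le_iff₀ hb']
      refine le_of_mul_le_mul_right ?_ hKb
      have H1 : ((N - (r-1) : ℕ) : ℝ) * ((1-η) * e * (k.choose r))
          ≤ ((k - (r-1) : ℕ) : ℝ) * d * (N.choose r) := by
        have h3 := mul_le_mul_of_nonneg_right hsum_low hb.le
        calc ((N - (r-1) : ℕ) : ℝ) * ((1-η) * e * (k.choose r))
            = ((N - (r-1) : ℕ) : ℝ) * ((1-η) * e * ((k.choose r : ℝ) / (N.choose r) * (N.choose r))) := by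
              rw [div_mul_cancel₀ _ hb.ne']
          _ = ((N - (r-1) : ℕ) : ℝ) * ((1-η) * (e * (k.choose r) / (N.choose r))) * (N.choose r) := by
              ring
          _ ≤ ((k - (r-1) : ℕ) : ℝ) * d * (N.choose r) := h3
      calc (1-η) * (e * (k.choose (r-1))) * (((k - (r-1) : ℕ) : ℝ) * (N.choose r))
          = (1-η) * e * ((N.choose r : ℝ) * (((k - (r-1) : ℕ) : ℝ) * (k.choose (r-1)))) := by
            ring
        _ = (1-η) * e * ((k.choose r : ℝ) * (((N - (r-1) : ℕ) : ℝ) * (N.choose (r-1)))) := by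
            rw [hid]
        _ = (((N - (r-1) : ℕ) : ℝ) * ((1-η) * e * (k.choose r))) * (N.choose (r-1)) := by
            ring
        _ ≤ (((k - (r-1) : ℕ) : ℝ) * d * (N.choose r)) * (N.choose (r-1)) :=
            mul_le_mul_of_nonneg_right H1 hb'.le
        _ = d * (N.choose (r-1)) * (((k - (r-1) : ℕ) : ℝ) * (N.choose r)) := by ring
    · rw [show (1+η) * (e * (k.choose (r-1) : ℝ) / (N.choose (r-1) : ℝ))
          = (1+η) * (e * (k.choose (r-1) : ℝ)) / (N.choose (r-1) : ℝ) from by ring,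
        le_div_iff₀ hb']
      refine le_of_mul_le_mul_right ?_ hKb
      have H1 : ((k - (r-1) : ℕ) : ℝ) * d * (N.choose r)
          ≤ ((N - (r-1) : ℕ) : ℝ) * ((1+η) * e * (k.choose r)) := by
        have := mul_le_mul_of_nonneg_right hsum_high hb.le
        calc ((k - (r-1) : ℕ) : ℝ) * d * (N.choose r) ≤ _ := this
          _ = ((N - (r-1) : ℕ) : ℝ) * ((1+η) * e * ((k.choose r : ℝ) / (N.choose r) * (N.choose r))) := by
              ring
          _ = ((N - (r-1) : ℕ) : ℝ) * ((1+η) * e * (k.choose r)) := by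
              rw [div_mul_cancel₀ _ hb.ne']
      calc d * (N.choose (r-1)) * (((k - (r-1) : ℕ) : ℝ) * (N.choose r))
          = (((k - (r-1) : ℕ) : ℝ) * d * (N.choose r)) * (N.choose (r-1)) := by ring
        _ ≤ (((N - (r-1) : ℕ) : ℝ) * ((1+η) * e * (k.choose r))) * (N.choose (r-1)) :=
            mul_le_mul_of_nonneg_right H1 hb'.le
        _ = (1+η) * e * ((k.choose r : ℝ) * (((N - (r-1) : ℕ) : ℝ) * (N.choose (r-1)))) := by
            ring
        _ = (1+η) * e * ((N.choose r : ℝ) * (((k - (r-1) : ℕ) : ℝ) * (k.choose (r-1)))) := by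
            rw [hid]
        _ = (1+η) * (e * (k.choose (r-1))) * (((k - (r-1) : ℕ) : ℝ) * (N.choose r)) := by ring
  · -- k > N : H is empty
    have hH : H = ∅ := by
      apply Finset.eq_empty_of_forall_notMem
      intro f hf
      have := huni f hf
      have h2 : f.card ≤ N := by
        simpa using Finset.card_le_card (Finset.subset_univ f)
      omega
    subst hH
    simp
end

section
/- Let H be a k-uniform (r,η)-near-regular hypergraph with η ∈ [0,1/3] and maximum (r+1)-degree Δ_{r+1}, and let x be a vertex of H. Then the link hypergraph H(x) := { f \ {x} : f ∈ E(H), x ∈ f } is a (k-1)-uniform hypergraph which is (r-1, 3η)-near-regular and has maximum r-degree at most Δ_{r+1}. -/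
open Finset

lemma count_mem_powersetCard {α : Type*} [DecidableEq α] (f : Finset α) (x : α) (hx : x ∈ f)
    (m : ℕ) :
    (((f.powersetCard (m+1)).filter (fun S => x ∈ S)).card) = (f.card - 1).choose m := by
  rw [← card_erase_of_mem hx, ← Finset.card_powersetCard m (f.erase x)]
  apply card_bij' (fun S _ => S.erase x) (fun S _ => insert x S)
  · intro S hS
    simp only [mem_filter] at hS
    exact insert_erase hS.2
  · intro S hS
    simp only [mem_powersetCard] at hS
    exact erase_insert (fun h => (mem_erase.mp (hS.1 h)).1 rfl)
  · intro S hS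
    simp only [mem_filter, mem_powersetCard] at hS
    simp only [mem_powersetCard]
    exact ⟨erase_subset_erase x hS.1.1, by rw [card_erase_of_mem hS.2, hS.1.2]; rfl⟩
  · intro S hS
    simp only [mem_powersetCard] at hS
    have hxS : x ∉ S := fun h => (mem_erase.mp (hS.1 h)).1 rfl
    simp only [mem_filter, mem_powersetCard, mem_insert]
    exact ⟨⟨insert_subset hx (hS.1.trans (erase_subset x f)),
      by rw [card_insert_of_notMem hxS, hS.2]⟩, by simp⟩

/-- Link inheritance: if `H` is `k`-uniform, `(r,η)`-near-regular with `η ∈ [0,1/3]`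
and maximum `(r+1)`-degree `Δ`, then the link `H(x) = {f \ {x} : x ∈ f ∈ H}`
is `(k-1)`-uniform, `(r-1,3η)`-near-regular (relative to its own average
`(r-1)`-degree `e(H(x))·C(k-1,r-1)/C(N-1,r-1)`), and has maximum `r`-degree at most `Δ`. -/
theorem link_near_regular (N k r : ℕ) (hr : 1 ≤ r) (hrk : r + 1 ≤ k)
    (η : ℝ) (hη0 : 0 ≤ η) (hη1 : η ≤ 1 / 3) (Δ : ℕ)
    (H : Finset (Finset (Fin N))) (huni : ∀ f ∈ H, f.card = k)
    (hreg : ∀ S : Finset (Fin N), S.card = r →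
      (1 - η) * ((H.card : ℝ) * (k.choose r) / (N.choose r))
          ≤ ((H.filter (fun f => S ⊆ f)).card : ℝ) ∧
      ((H.filter (fun f => S ⊆ f)).card : ℝ)
          ≤ (1 + η) * ((H.card : ℝ) * (k.choose r) / (N.choose r)))
    (hΔ : ∀ T : Finset (Fin N), T.card = r + 1 →
      (H.filter (fun f => T ⊆ f)).card ≤ Δ)
    (x : Fin N)
    (Hx : Finset (Finset (Fin N)))
    (hHx : Hx = (H.filter (fun f => x ∈ f)).image (fun f => f.erase x)) :
    (∀ g ∈ Hx, g.card = k - 1) ∧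
    (∀ S : Finset (Fin N), x ∉ S → S.card = r - 1 →
      (1 - 3 * η) * ((Hx.card : ℝ) * ((k - 1).choose (r - 1)) / ((N - 1).choose (r - 1)))
          ≤ ((Hx.filter (fun g => S ⊆ g)).card : ℝ) ∧
      ((Hx.filter (fun g => S ⊆ g)).card : ℝ)
          ≤ (1 + 3 * η) * ((Hx.card : ℝ) * ((k - 1).choose (r - 1)) / ((N - 1).choose (r - 1)))) ∧
    (∀ T : Finset (Fin N), x ∉ T → T.card = r →
      (Hx.filter (fun g => T ⊆ g)).card ≤ Δ) := by
  subst hHx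
  -- injectivity of erase on edges containing x
  have hinj : Set.InjOn (fun f : Finset (Fin N) => f.erase x)
      (H.filter (fun f => x ∈ f) : Set (Finset (Fin N))) := by
    intro f hf g hg h
    simp only [coe_filter, Set.mem_setOf_eq] at hf hg
    rw [← insert_erase hf.2, ← insert_erase hg.2]
    simp only at h
    rw [h]
  -- cardinality of the link
  have hcard_Hx : ((H.filter (fun f => x ∈ f)).image (fun f => f.erase x)).card
      = (H.filter (fun f => x ∈ f)).card := card_image_of_injOn hinj
  -- fiber lemma
  have hfiber : ∀ S : Finset (Fin N), x ∉ S →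
      (((H.filter (fun f => x ∈ f)).image (fun f => f.erase x)).filter
        (fun g => S ⊆ g)).card = (H.filter (fun f => insert x S ⊆ f)).card := by
    intro S hxS
    rw [filter_image]
    have heq : ((H.filter (fun f => x ∈ f)).filter (fun f => S ⊆ f.erase x))
        = H.filter (fun f => insert x S ⊆ f) := by
      rw [filter_filter]
      apply filter_congr
      intro f _
      simp only [insert_subset_iff]
      constructor
      · rintro ⟨h1, h2⟩
        exact ⟨h1, h2.trans (erase_subset x f)⟩
      · rintro ⟨h1, h2⟩
        exact ⟨h1, fun a ha => mem_erase.mpr ⟨fun h => hxS (h ▸ ha), h2 ha⟩⟩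
    rw [heq]
    apply card_image_of_injOn
    apply hinj.mono
    intro f hf
    simp only [coe_filter, Set.mem_setOf_eq, mem_coe, mem_filter] at hf ⊢
    exact ⟨hf.1, hf.2 (mem_insert_self x S)⟩
  refine ⟨?_, ?_, ?_⟩
  · -- uniformity
    intro g hg
    simp only [mem_image, mem_filter] at hg
    obtain ⟨f, ⟨hfH, hxf⟩, rfl⟩ := hg
    rw [card_erase_of_mem hxf, huni f hfH]
  · -- near-regularity
    intro S hxS hScard
    obtain ⟨m, rfl⟩ : ∃ m, r = m + 1 := ⟨r - 1, (Nat.succ_pred_eq_of_pos hr).symm⟩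
    simp only [Nat.add_sub_cancel] at hScard ⊢
    -- basic cardinality facts
    have hxScard : (insert x S).card = m + 1 := by
      rw [card_insert_of_notMem hxS, hScard]
    have hmN : m + 1 ≤ N := by
      have := card_le_card (subset_univ (insert x S))
      rwa [hxScard, card_univ, Fintype.card_fin] at this
    -- the family of r-sets containing x
    set A : Finset (Finset (Fin N)) :=
      ((univ : Finset (Fin N)).powersetCard (m+1)).filter (fun S => x ∈ S) with hA
    have hAcard : A.card = (N - 1).choose m := by
      rw [hA, count_mem_powersetCard _ x (mem_univ x), card_univ, Fintype.card_fin]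
    -- double counting
    have hsum : ∑ T ∈ A, (H.filter (fun f => T ⊆ f)).card
        = (H.filter (fun f => x ∈ f)).card * (k - 1).choose m := by
      have : ∀ T ∈ A, (H.filter (fun f => T ⊆ f)).card
          = ∑ f ∈ H, if T ⊆ f then 1 else 0 := by
        intro T _; rw [card_filter]
      rw [sum_congr rfl this, sum_comm]
      have hterm : ∀ f ∈ H, (∑ T ∈ A, if T ⊆ f then 1 else 0)
          = if x ∈ f then (k - 1).choose m else 0 := by
        intro f hf
        rw [← card_filter]
        by_cases hxf : x ∈ f
        · rw [if_pos hxf]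
          have : A.filter (fun T => T ⊆ f)
              = (f.powersetCard (m+1)).filter (fun T => x ∈ T) := by
            ext T
            simp only [hA, mem_filter, mem_powersetCard, subset_univ, true_and]
            tauto
          rw [this, count_mem_powersetCard f x hxf m, huni f hf]
        · rw [if_neg hxf]
          rw [card_eq_zero, filter_eq_empty_iff]
          intro T hT hTf
          simp only [hA, mem_filter] at hT
          exact hxf (hTf hT.2)
      rw [sum_congr rfl hterm, ← sum_filter, sum_const, smul_eq_mul]
    -- real number abbreviations
    set dbar : ℝ := (H.card : ℝ) * (k.choose (m+1)) / (N.choose (m+1)) with hdbar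
    set dx : ℝ := ((H.filter (fun f => x ∈ f)).card : ℝ) with hdx
    set c1 : ℝ := ((N - 1).choose m : ℝ) with hc1
    set ck : ℝ := ((k - 1).choose m : ℝ) with hck
    have hc1pos : 0 < c1 := by
      rw [hc1]
      exact_mod_cast Nat.choose_pos (by omega)
    have hdbar0 : 0 ≤ dbar := by
      rw [hdbar]
      positivity
    -- summing hreg over A
    have hsum_lb : (1 - η) * dbar * c1 ≤ dx * ck := by
      have h1 : ∑ T ∈ A, ((1 - η) * dbar)
          ≤ ∑ T ∈ A, ((H.filter (fun f => T ⊆ f)).card : ℝ) := by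
        apply sum_le_sum
        intro T hT
        simp only [hA, mem_filter, mem_powersetCard] at hT
        exact (hreg T hT.1.2).1
      rw [sum_const, nsmul_eq_mul, hAcard] at h1
      have h2 : (∑ T ∈ A, (((H.filter (fun f => T ⊆ f)).card : ℕ) : ℝ))
          = dx * ck := by
        rw [← Nat.cast_sum, hsum]
        push_cast
        ring
      calc (1 - η) * dbar * c1 = (((N-1).choose m : ℕ) : ℝ) * ((1 - η) * dbar) := by
            rw [← hc1]; ring
        _ ≤ _ := h1.trans_eq h2
    have hsum_ub : dx * ck ≤ (1 + η) * dbar * c1 := by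
      have h1 : ∑ T ∈ A, ((H.filter (fun f => T ⊆ f)).card : ℝ)
          ≤ ∑ T ∈ A, ((1 + η) * dbar) := by
        apply sum_le_sum
        intro T hT
        simp only [hA, mem_filter, mem_powersetCard] at hT
        exact (hreg T hT.1.2).2
      rw [sum_const, nsmul_eq_mul, hAcard] at h1
      have h2 : (∑ T ∈ A, (((H.filter (fun f => T ⊆ f)).card : ℕ) : ℝ))
          = dx * ck := by
        rw [← Nat.cast_sum, hsum]
        push_cast
        ring
      calc dx * ck = ∑ T ∈ A, (((H.filter (fun f => T ⊆ f)).card : ℕ) : ℝ) := h2.symm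
        _ ≤ (((N-1).choose m : ℕ) : ℝ) * ((1 + η) * dbar) := h1
        _ = (1 + η) * dbar * c1 := by rw [← hc1]; ring
    -- the average degree of the link
    set avg : ℝ := ((((H.filter (fun f => x ∈ f)).image (fun f => f.erase x)).card : ℝ))
        * ck / c1 with havg
    have havg_eq : avg = dx * ck / c1 := by rw [havg, hcard_Hx, hdx]
    have havg_lb : (1 - η) * dbar ≤ avg := by
      rw [havg_eq, le_div_iff₀ hc1pos]
      exact hsum_lb
    have havg_ub : avg ≤ (1 + η) * dbar := by
      rw [havg_eq, div_le_iff₀ hc1pos]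
      exact hsum_ub
    -- the degree of S in the link
    have hdeg : ((((H.filter (fun f => x ∈ f)).image (fun f => f.erase x)).filter
        (fun g => S ⊆ g)).card : ℝ) = ((H.filter (fun f => insert x S ⊆ f)).card : ℝ) := by
      exact_mod_cast hfiber S hxS
    have hS_lb := (hreg (insert x S) hxScard).1
    have hS_ub := (hreg (insert x S) hxScard).2
    rw [← hdeg] at hS_lb hS_ub
    constructor
    · nlinarith [mul_nonneg hη0 hdbar0, mul_nonneg hη0 (mul_nonneg hη0 hdbar0)]
    · nlinarith [mul_nonneg hη0 hdbar0, mul_nonneg hη0 (mul_nonneg hη0 hdbar0),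
        mul_nonneg (mul_nonneg hη0 hη0) hdbar0]
  · -- max degree
    intro T hxT hTcard
    rw [hfiber T hxT]
    apply hΔ
    rw [card_insert_of_notMem hxT, hTcard]
end

section
/- Deterministic increment bound: let H be a k-uniform (r,η)-near-regular hypergraph on [N] with h edges. Fix 1 ≤ ℓ ≤ r, and let B_i = B_{i-1} ∪ {b_i} with B_{i-1} of size i-1 and b_i ∉ B_{i-1}. Then the increment A_ℓ(B_i) := N_ℓ(B_i) - N_ℓ(B_{i-1}) satisfies |A_ℓ(B_i) - C(i-1,ℓ-1)·d̄_ℓ| ≤ η·C(i-1,ℓ-1)·d̄_ℓ, and consequently the centered increment X_ℓ(B_i) := A_ℓ(B_i) - E[A_ℓ(B_i)|B_{i-1}] satisfies |X_ℓ(B_i)| ≤ 2ℓ·C(k,ℓ)·η·s^{ℓ-1}·h/N where s = i/N. -/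
open Finset

-- number of supersets T of S inside f with |T| = |S| + m
lemma aux_card_between {α : Type*} [DecidableEq α] {S f : Finset α} (hSf : S ⊆ f) (m : ℕ) :
    ((f.powersetCard (S.card + m)).filter (fun T => S ⊆ T)).card
      = (f.card - S.card).choose m := by
  rw [← card_sdiff_of_subset hSf, ← Finset.card_powersetCard]
  apply Finset.card_nbij' (fun T => T \ S) (fun U => S ∪ U)
  · intro T hT
    simp only [Finset.mem_coe, mem_filter, mem_powersetCard] at hT
    rw [Finset.mem_coe, mem_powersetCard]
    refine ⟨sdiff_subset_sdiff hT.1.1 le_rfl, ?_⟩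
    rw [card_sdiff_of_subset hT.2, hT.1.2, Nat.add_sub_cancel_left]
  · intro U hU
    rw [Finset.mem_coe, mem_powersetCard] at hU
    have hdisj : Disjoint S U := disjoint_of_subset_right hU.1 disjoint_sdiff_self_right
    simp only [Finset.mem_coe, mem_filter, mem_powersetCard]
    refine ⟨⟨union_subset hSf (hU.1.trans sdiff_subset), ?_⟩, subset_union_left⟩
    rw [card_union_of_disjoint hdisj, hU.2]
  · intro T hT
    simp only [Finset.mem_coe, mem_filter, mem_powersetCard] at hT
    exact union_sdiff_of_subset hT.2
  · intro U hU
    rw [Finset.mem_coe, mem_powersetCard] at hU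
    exact union_sdiff_cancel_left (disjoint_of_subset_right hU.1 disjoint_sdiff_self_right)

-- double counting: sum over r-supersets of S of their degree
lemma aux_double_count {N : ℕ} (H : Finset (Finset (Fin N))) (k r ℓ : ℕ)
    (hℓr : ℓ ≤ r) (huni : ∀ f ∈ H, f.card = k)
    (S : Finset (Fin N)) (hS : S.card = ℓ) :
    ∑ T ∈ (univ.powersetCard r).filter (fun T => S ⊆ T),
        (H.filter (fun f => T ⊆ f)).card
      = (H.filter (fun f => S ⊆ f)).card * (k - ℓ).choose (r - ℓ) := by
  classical
  have key : ∀ T, (H.filter (fun f => T ⊆ f)).card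
      = ∑ f ∈ H, if T ⊆ f then 1 else 0 := by
    intro T; rw [Finset.sum_boole]; rfl
  calc ∑ T ∈ (univ.powersetCard r).filter (fun T => S ⊆ T), (H.filter (fun f => T ⊆ f)).card
      = ∑ T ∈ (univ.powersetCard r).filter (fun T => S ⊆ T), ∑ f ∈ H, if T ⊆ f then 1 else 0 := by
        exact Finset.sum_congr rfl fun T _ => key T
    _ = ∑ f ∈ H, ∑ T ∈ (univ.powersetCard r).filter (fun T => S ⊆ T), if T ⊆ f then 1 else 0 :=
        Finset.sum_comm
    _ = ∑ f ∈ H, if S ⊆ f then (k - ℓ).choose (r - ℓ) else 0 := by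
        refine Finset.sum_congr rfl fun f hf => ?_
        rw [Finset.sum_boole]
        by_cases hSf : S ⊆ f
        · rw [if_pos hSf]
          have : ((univ.powersetCard r).filter (fun T => S ⊆ T)).filter (fun T => T ⊆ f)
              = (f.powersetCard r).filter (fun T => S ⊆ T) := by
            ext T
            simp only [mem_filter, mem_powersetCard, subset_univ, true_and]
            tauto
          rw [this]
          have hr' : r = S.card + (r - ℓ) := by omega
          rw [hr', aux_card_between hSf, huni f hf, hS]
          simp
        · rw [if_neg hSf]
          norm_cast
          rw [Finset.card_eq_zero, Finset.filter_eq_empty_iff]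
          intro T hT
          rw [mem_filter] at hT
          exact fun hTf => hSf (hT.2.trans hTf)
    _ = (H.filter (fun f => S ⊆ f)).card * (k - ℓ).choose (r - ℓ) := by
        rw [← Finset.sum_filter, Finset.sum_const, smul_eq_mul]

lemma aux_degree_bound {N k r ℓ h : ℕ} (hℓr : ℓ ≤ r) (hrk : r ≤ k) (hkN : k ≤ N)
    (η : ℝ) (H : Finset (Finset (Fin N))) (hH : H.card = h)
    (huni : ∀ f ∈ H, f.card = k)
    (hreg : ∀ S : Finset (Fin N), S.card = r →
      (1 - η) * ((h : ℝ) * (k.choose r) / (N.choose r)) ≤ ((H.filter (fun f => S ⊆ f)).card : ℝ) ∧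
      ((H.filter (fun f => S ⊆ f)).card : ℝ) ≤ (1 + η) * ((h : ℝ) * (k.choose r) / (N.choose r)))
    (S : Finset (Fin N)) (hS : S.card = ℓ) :
    (1 - η) * ((h : ℝ) * (k.choose ℓ) / (N.choose ℓ)) ≤ ((H.filter (fun f => S ⊆ f)).card : ℝ) ∧
    ((H.filter (fun f => S ⊆ f)).card : ℝ) ≤ (1 + η) * ((h : ℝ) * (k.choose ℓ) / (N.choose ℓ)) := by
  classical
  set P := (univ.powersetCard r).filter (fun T => S ⊆ T) with hP
  have hPcard : P.card = (N - ℓ).choose (r - ℓ) := by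
    have hr' : r = S.card + (r - ℓ) := by omega
    rw [hP, hr', aux_card_between (subset_univ S)]
    rw [card_univ, Fintype.card_fin, hS]
    congr 1
    omega
  have hTr : ∀ T ∈ P, T.card = r := by
    intro T hT
    rw [hP, mem_filter, mem_powersetCard] at hT
    exact hT.1.2
  have hdc := aux_double_count H k r ℓ hℓr huni S hS
  rw [← hP] at hdc
  -- cast to ℝ
  have hdcR : ∑ T ∈ P, ((H.filter (fun f => T ⊆ f)).card : ℝ)
      = ((H.filter (fun f => S ⊆ f)).card : ℝ) * ((k - ℓ).choose (r - ℓ) : ℝ) := by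
    exact_mod_cast congrArg (Nat.cast : ℕ → ℝ) hdc
  set dr : ℝ := (h : ℝ) * (k.choose r) / (N.choose r) with hdr
  have hlow : (P.card : ℝ) * ((1 - η) * dr) ≤ ∑ T ∈ P, ((H.filter (fun f => T ⊆ f)).card : ℝ) := by
    rw [← nsmul_eq_mul]
    exact Finset.card_nsmul_le_sum P _ _ (fun T hT => (hreg T (hTr T hT)).1)
  have hhigh : ∑ T ∈ P, ((H.filter (fun f => T ⊆ f)).card : ℝ) ≤ (P.card : ℝ) * ((1 + η) * dr) := by
    rw [← nsmul_eq_mul]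
    exact Finset.sum_le_card_nsmul P _ _ (fun T hT => (hreg T (hTr T hT)).2)
  -- choose identities
  have keyN : (N - ℓ).choose (r - ℓ) * k.choose r * N.choose ℓ
      = (k - ℓ).choose (r - ℓ) * k.choose ℓ * N.choose r := by
    have e1 := Nat.choose_mul (n := N) hℓr
    have e2 := Nat.choose_mul (n := k) hℓr
    have hpos : 0 < r.choose ℓ := Nat.choose_pos hℓr
    apply Nat.eq_of_mul_eq_mul_right hpos
    calc (N - ℓ).choose (r - ℓ) * k.choose r * N.choose ℓ * r.choose ℓ
        = (N.choose ℓ * (N - ℓ).choose (r - ℓ)) * (k.choose r * r.choose ℓ) := by ring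
      _ = (N.choose r * r.choose ℓ) * (k.choose ℓ * (k - ℓ).choose (r - ℓ)) := by rw [← e1, ← e2]
      _ = (k - ℓ).choose (r - ℓ) * k.choose ℓ * N.choose r * r.choose ℓ := by ring
  have hNr : (0 : ℝ) < (N.choose r : ℝ) := by exact_mod_cast Nat.choose_pos (hrk.trans hkN)
  have hNl : (0 : ℝ) < (N.choose ℓ : ℝ) := by exact_mod_cast Nat.choose_pos ((hℓr.trans hrk).trans hkN)
  have hkl : (0 : ℝ) < ((k - ℓ).choose (r - ℓ) : ℝ) := by
    exact_mod_cast Nat.choose_pos (Nat.sub_le_sub_right hrk ℓ)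
  have keyR : ((N - ℓ).choose (r - ℓ) : ℝ) * dr
      = ((k - ℓ).choose (r - ℓ) : ℝ) * ((h : ℝ) * (k.choose ℓ) / (N.choose ℓ)) := by
    have := congrArg (Nat.cast : ℕ → ℝ) keyN
    push_cast at this
    rw [hdr]
    field_simp
    linear_combination (h : ℝ) * this
  rw [hdcR, hPcard] at hlow hhigh
  constructor
  · rw [← mul_le_mul_iff_of_pos_right hkl]
    calc (1 - η) * ((h : ℝ) * (k.choose ℓ) / (N.choose ℓ)) * ((k - ℓ).choose (r - ℓ) : ℝ)
        = ((N - ℓ).choose (r - ℓ) : ℝ) * ((1 - η) * dr) := by linear_combination (η - 1) * keyR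
      _ ≤ ((H.filter (fun f => S ⊆ f)).card : ℝ) * ((k - ℓ).choose (r - ℓ) : ℝ) := hlow
  · rw [← mul_le_mul_iff_of_pos_right hkl]
    calc ((H.filter (fun f => S ⊆ f)).card : ℝ) * ((k - ℓ).choose (r - ℓ) : ℝ)
        ≤ ((N - ℓ).choose (r - ℓ) : ℝ) * ((1 + η) * dr) := hhigh
      _ = (1 + η) * ((h : ℝ) * (k.choose ℓ) / (N.choose ℓ)) * ((k - ℓ).choose (r - ℓ) : ℝ) := by
          linear_combination (1 + η) * keyR

lemma aux_A_formula {N ℓ : ℕ} (hℓ : 1 ≤ ℓ) (H : Finset (Finset (Fin N)))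
    (B : Finset (Fin N)) (b' : Fin N) (hb' : b' ∉ B) :
    ∑ f ∈ H, (f ∩ insert b' B).card.choose ℓ
      = ∑ f ∈ H, (f ∩ B).card.choose ℓ
        + ∑ C ∈ B.powersetCard (ℓ - 1), (H.filter (fun f => insert b' C ⊆ f)).card := by
  classical
  obtain ⟨l, rfl⟩ : ∃ l, ℓ = l + 1 := ⟨ℓ - 1, by omega⟩
  simp only [Nat.add_sub_cancel]
  have step1 : ∀ f : Finset (Fin N), (f ∩ insert b' B).card.choose (l + 1)
      = (f ∩ B).card.choose (l + 1)
        + ((B.powersetCard l).filter (fun C => insert b' C ⊆ f)).card := by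
    intro f
    by_cases hbf : b' ∈ f
    · have hins : f ∩ insert b' B = insert b' (f ∩ B) := by
        ext a
        simp only [mem_inter, mem_insert]
        constructor
        · rintro ⟨haf, (rfl | hab)⟩
          · exact Or.inl rfl
          · exact Or.inr ⟨haf, hab⟩
        · rintro (rfl | ⟨haf, hab⟩)
          · exact ⟨hbf, Or.inl rfl⟩
          · exact ⟨haf, Or.inr hab⟩
      have hcard : (f ∩ insert b' B).card = (f ∩ B).card + 1 := by
        rw [hins, card_insert_of_notMem (fun hc => hb' (mem_inter.1 hc).2)]
      have hfilt : (B.powersetCard l).filter (fun C => insert b' C ⊆ f)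
          = (f ∩ B).powersetCard l := by
        ext C
        simp only [mem_filter, mem_powersetCard, insert_subset_iff, subset_inter_iff]
        tauto
      rw [hcard, Nat.choose_succ_succ, hfilt, card_powersetCard]
      exact Nat.add_comm _ _
    · have hins : f ∩ insert b' B = f ∩ B := by
        ext a; simp only [mem_inter, mem_insert]
        constructor
        · rintro ⟨haf, (rfl | hab)⟩
          · exact absurd haf hbf
          · exact ⟨haf, hab⟩
        · tauto
      have hfilt : (B.powersetCard l).filter (fun C => insert b' C ⊆ f) = ∅ := by
        rw [filter_eq_empty_iff]
        intro C _ hc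
        exact hbf (hc (mem_insert_self b' C))
      rw [hins, hfilt]
      simp
  rw [Finset.sum_congr rfl (fun f _ => step1 f), Finset.sum_add_distrib]
  congr 1
  calc ∑ f ∈ H, ((B.powersetCard l).filter (fun C => insert b' C ⊆ f)).card
      = ∑ f ∈ H, ∑ C ∈ B.powersetCard l, if insert b' C ⊆ f then 1 else 0 := by
        refine sum_congr rfl fun f _ => ?_
        simp [Finset.sum_boole]
    _ = ∑ C ∈ B.powersetCard l, ∑ f ∈ H, if insert b' C ⊆ f then 1 else 0 := Finset.sum_comm
    _ = ∑ C ∈ B.powersetCard l, (H.filter (fun f => insert b' C ⊆ f)).card := by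
        refine sum_congr rfl fun C _ => ?_
        simp [Finset.sum_boole]

lemma aux_descFac {i N : ℕ} (hiN : i ≤ N) : ∀ m : ℕ,
    (i - 1).descFactorial m * N ^ m ≤ i ^ m * (N - 1).descFactorial m := by
  intro m
  induction m with
  | zero => simp
  | succ m ih =>
    rw [Nat.descFactorial_succ, Nat.descFactorial_succ]
    have hterm : (i - 1 - m) * N ≤ i * (N - 1 - m) := by
      have h1 : i - 1 - m = i - (m + 1) := by omega
      have h2 : N - 1 - m = N - (m + 1) := by omega
      rw [h1, h2, Nat.sub_mul, Nat.mul_sub]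
      exact Nat.sub_le_sub_left (by rw [mul_comm]; exact Nat.mul_le_mul_left _ hiN) _
    calc (i - 1 - m) * (i - 1).descFactorial m * N ^ (m + 1)
        = ((i - 1 - m) * N) * ((i - 1).descFactorial m * N ^ m) := by ring
      _ ≤ (i * (N - 1 - m)) * (i ^ m * (N - 1).descFactorial m) :=
          Nat.mul_le_mul hterm ih
      _ = i ^ (m + 1) * ((N - 1 - m) * (N - 1).descFactorial m) := by ring

lemma aux_choose_ineq {i N ℓ : ℕ} (hℓ : 1 ≤ ℓ) (hi : 1 ≤ i) (hiN : i ≤ N) :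
    (i - 1).choose (ℓ - 1) * N ^ ℓ ≤ ℓ * i ^ (ℓ - 1) * N.choose ℓ := by
  obtain ⟨l, rfl⟩ : ∃ l, ℓ = l + 1 := ⟨ℓ - 1, by omega⟩
  simp only [Nat.add_sub_cancel]
  apply Nat.le_of_mul_le_mul_left _ (Nat.factorial_pos (l + 1))
  have e1 : (i - 1).descFactorial l = Nat.factorial l * (i - 1).choose l :=
    Nat.descFactorial_eq_factorial_mul_choose _ _
  have e2 : N.descFactorial (l + 1) = Nat.factorial (l + 1) * N.choose (l + 1) :=
    Nat.descFactorial_eq_factorial_mul_choose _ _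
  have e3 : N.descFactorial (l + 1) = N * (N - 1).descFactorial l := by
    obtain ⟨n, rfl⟩ : ∃ n, N = n + 1 := ⟨N - 1, by omega⟩
    simp only [Nat.add_sub_cancel]
    exact Nat.succ_descFactorial_succ n l
  have key := aux_descFac hiN l
  calc Nat.factorial (l + 1) * ((i - 1).choose l * N ^ (l + 1))
      = (l + 1) * ((i - 1).descFactorial l * N ^ l) * N := by
        rw [Nat.factorial_succ, e1]; ring
    _ ≤ (l + 1) * (i ^ l * (N - 1).descFactorial l) * N :=
        Nat.mul_le_mul_right _ (Nat.mul_le_mul_left _ key)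
    _ = (l + 1) * i ^ l * (N * (N - 1).descFactorial l) := by ring
    _ = (l + 1) * i ^ l * (Nat.factorial (l + 1) * N.choose (l + 1)) := by rw [← e3, e2]
    _ = Nat.factorial (l + 1) * ((l + 1) * i ^ l * N.choose (l + 1)) := by ring

set_option maxHeartbeats 1000000 in
/-- Deterministic increment bound: for a `k`-uniform `(r,η)`-near-regular
hypergraph `H` on `N` vertices with `h` edges, `1 ≤ ℓ ≤ r ≤ k`, and
`B_i = B ∪ {b}` with `|B| = i-1`, `b ∉ B`, the increment
`A_ℓ = N_ℓ(B ∪ {b}) - N_ℓ(B)` satisfies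
`|A_ℓ - C(i-1,ℓ-1)·d̄_ℓ| ≤ η·C(i-1,ℓ-1)·d̄_ℓ`, and the centered increment
`X_ℓ = A_ℓ - E[A_ℓ | B]` satisfies `|X_ℓ| ≤ 2ℓ·C(k,ℓ)·η·s^{ℓ-1}·h/N`, `s = i/N`. -/
theorem deterministic_increment_bound (N k r ℓ i h : ℕ)
    (hℓ : 1 ≤ ℓ) (hℓr : ℓ ≤ r) (hrk : r ≤ k) (hi : 1 ≤ i) (hiN : i ≤ N)
    (η : ℝ) (hη0 : 0 ≤ η)
    (H : Finset (Finset (Fin N))) (hH : H.card = h)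
    (huni : ∀ f ∈ H, f.card = k)
    (hreg : ∀ S : Finset (Fin N), S.card = r →
      (1 - η) * ((h : ℝ) * (k.choose r) / (N.choose r))
          ≤ ((H.filter (fun f => S ⊆ f)).card : ℝ) ∧
      ((H.filter (fun f => S ⊆ f)).card : ℝ)
          ≤ (1 + η) * ((h : ℝ) * (k.choose r) / (N.choose r)))
    (B : Finset (Fin N)) (hB : B.card = i - 1) (b : Fin N) (hb : b ∉ B)
    (A : Fin N → ℝ)
    (hA : ∀ b' : Fin N, A b' =
      (∑ f ∈ H, (((f ∩ insert b' B).card.choose ℓ : ℕ) : ℝ))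
        - ∑ f ∈ H, (((f ∩ B).card.choose ℓ : ℕ) : ℝ)) :
    |A b - ((i - 1).choose (ℓ - 1) : ℝ) * ((h : ℝ) * (k.choose ℓ) / (N.choose ℓ))|
        ≤ η * ((i - 1).choose (ℓ - 1) : ℝ) * ((h : ℝ) * (k.choose ℓ) / (N.choose ℓ)) ∧
    |A b - (∑ b' ∈ Bᶜ, A b') / ((N : ℝ) - i + 1)|
        ≤ 2 * ℓ * (k.choose ℓ : ℝ) * η * ((i : ℝ) / N) ^ (ℓ - 1) * h / N := by
  classical
  by_cases hkN : k ≤ N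
  · -- main case
    have hAform : ∀ b' : Fin N, b' ∉ B → A b' =
        ∑ C ∈ B.powersetCard (ℓ - 1), ((H.filter (fun f => insert b' C ⊆ f)).card : ℝ) := by
      intro b' hb'
      rw [hA b']
      have hnat := aux_A_formula hℓ H B b' hb'
      have hcast := congrArg (Nat.cast : ℕ → ℝ) hnat
      push_cast at hcast
      linarith [hcast]
    set μ : ℝ := (h : ℝ) * (k.choose ℓ) / (N.choose ℓ) with hμ
    have hμ0 : 0 ≤ μ := by positivity
    set n : ℝ := ((i - 1).choose (ℓ - 1) : ℝ) with hn
    have hn0 : 0 ≤ n := by positivity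
    have hbound : ∀ b' : Fin N, b' ∉ B →
        (1 - η) * (n * μ) ≤ A b' ∧ A b' ≤ (1 + η) * (n * μ) := by
      intro b' hb'
      rw [hAform b' hb']
      have hcardP : ((B.powersetCard (ℓ - 1)).card : ℝ) = n := by
        rw [card_powersetCard, hB, hn]
      have hdeg : ∀ C ∈ B.powersetCard (ℓ - 1),
          (1 - η) * μ ≤ ((H.filter (fun f => insert b' C ⊆ f)).card : ℝ) ∧
          ((H.filter (fun f => insert b' C ⊆ f)).card : ℝ) ≤ (1 + η) * μ := by
        intro C hC
        rw [mem_powersetCard] at hC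
        have hCcard : (insert b' C).card = ℓ := by
          rw [card_insert_of_notMem (fun hc => hb' (hC.1 hc)), hC.2]
          omega
        exact aux_degree_bound hℓr hrk hkN η H hH huni hreg _ hCcard
      constructor
      · calc (1 - η) * (n * μ)
            = ((B.powersetCard (ℓ - 1)).card : ℝ) * ((1 - η) * μ) := by
              rw [hcardP]; ring
          _ ≤ ∑ C ∈ B.powersetCard (ℓ - 1),
                ((H.filter (fun f => insert b' C ⊆ f)).card : ℝ) := by
              rw [← nsmul_eq_mul]
              exact Finset.card_nsmul_le_sum _ _ _ (fun C hC => (hdeg C hC).1)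
      · calc ∑ C ∈ B.powersetCard (ℓ - 1),
                ((H.filter (fun f => insert b' C ⊆ f)).card : ℝ)
            ≤ ((B.powersetCard (ℓ - 1)).card : ℝ) * ((1 + η) * μ) := by
              rw [← nsmul_eq_mul]
              exact Finset.sum_le_card_nsmul _ _ _ (fun C hC => (hdeg C hC).2)
          _ = (1 + η) * (n * μ) := by rw [hcardP]; ring
    have hAb := hbound b hb
    constructor
    · rw [abs_le]
      constructor
      · nlinarith [hAb.1, mul_nonneg hn0 hμ0]
      · nlinarith [hAb.2, mul_nonneg hn0 hμ0]
    · -- part 2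
      have hN0 : (0 : ℝ) < N := by
        have : (1 : ℝ) ≤ (N : ℝ) := by exact_mod_cast hi.trans hiN
        linarith
      have hM : ((Bᶜ.card : ℕ) : ℝ) = (N : ℝ) - i + 1 := by
        have hc : Bᶜ.card = N - i + 1 := by
          rw [card_compl, hB, Fintype.card_fin]
          omega
        rw [hc]
        push_cast [Nat.cast_sub hiN]
        ring
      have hMpos : (0 : ℝ) < (N : ℝ) - i + 1 := by
        have : (i : ℝ) ≤ (N : ℝ) := by exact_mod_cast hiN
        linarith
      have hsumlow : ((N : ℝ) - i + 1) * ((1 - η) * (n * μ)) ≤ ∑ b' ∈ Bᶜ, A b' := by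
        rw [← hM, ← nsmul_eq_mul]
        exact Finset.card_nsmul_le_sum _ _ _
          (fun b' hb' => (hbound b' (mem_compl.1 hb')).1)
      have hsumhigh : ∑ b' ∈ Bᶜ, A b' ≤ ((N : ℝ) - i + 1) * ((1 + η) * (n * μ)) := by
        rw [← hM, ← nsmul_eq_mul]
        exact Finset.sum_le_card_nsmul _ _ _
          (fun b' hb' => (hbound b' (mem_compl.1 hb')).2)
      have havglow : (1 - η) * (n * μ) ≤ (∑ b' ∈ Bᶜ, A b') / ((N : ℝ) - i + 1) := by
        rw [le_div_iff₀ hMpos]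
        nlinarith [hsumlow]
      have havghigh : (∑ b' ∈ Bᶜ, A b') / ((N : ℝ) - i + 1) ≤ (1 + η) * (n * μ) := by
        rw [div_le_iff₀ hMpos]
        nlinarith [hsumhigh]
      have habs : |A b - (∑ b' ∈ Bᶜ, A b') / ((N : ℝ) - i + 1)| ≤ 2 * η * (n * μ) := by
        rw [abs_le]
        constructor
        · nlinarith [hAb.1, havghigh]
        · nlinarith [hAb.2, havglow]
      refine habs.trans ?_
      -- final arithmetic bound
      have hNl : (0 : ℝ) < (N.choose ℓ : ℝ) := by
        exact_mod_cast Nat.choose_pos ((hℓr.trans hrk).trans hkN)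
      have hNpow : (0 : ℝ) < (N : ℝ) ^ ℓ := by positivity
      have hkey : n / (N.choose ℓ : ℝ) ≤ (ℓ : ℝ) * (i : ℝ) ^ (ℓ - 1) / (N : ℝ) ^ ℓ := by
        rw [div_le_div_iff₀ hNl hNpow, hn]
        exact_mod_cast aux_choose_ineq hℓ hi hiN (N := N)
      have hpow : (N : ℝ) ^ ℓ = (N : ℝ) ^ (ℓ - 1) * N := by
        rw [← pow_succ]
        congr 1
        omega
      calc 2 * η * (n * μ)
          = (2 * η * h * (k.choose ℓ : ℝ)) * (n / (N.choose ℓ : ℝ)) := by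
            rw [hμ]; ring
        _ ≤ (2 * η * h * (k.choose ℓ : ℝ)) * ((ℓ : ℝ) * (i : ℝ) ^ (ℓ - 1) / (N : ℝ) ^ ℓ) := by
            apply mul_le_mul_of_nonneg_left hkey
            positivity
        _ = 2 * ℓ * (k.choose ℓ : ℝ) * η * ((i : ℝ) / N) ^ (ℓ - 1) * h / N := by
            rw [div_pow, hpow]
            field_simp
  · -- degenerate case : H = ∅
    have hHempty : H = ∅ := by
      rw [eq_empty_iff_forall_notMem]
      intro f hf
      have h1 : f.card ≤ N := by
        have := Finset.card_le_univ f
        simpa using this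
      rw [huni f hf] at h1
      omega
    have h0 : h = 0 := by rw [← hH, hHempty, card_empty]
    subst h0
    have hA0 : ∀ b' : Fin N, A b' = 0 := by
      intro b'
      rw [hA b', hHempty]
      simp
    constructor
    · simp [hA0]
    · simp [hA0]
end

section
/- Azuma–Hoeffding with truncation: let (S_i)_{i=0}^m be a martingale with respect to the filtration generated by the nested random set process (B_i)_{i=0}^N on [N], with increments X_i = S_i - S_{i-1}, and let c_1,...,c_m be nonnegative reals. Then for every a > 0, P(S_m - S_0 > a) ≤ exp(-a²/(2Σ_{i=1}^m c_i²)) + N·Σ_{i=1}^m P(|X_i| > c_i), and the same bound holds for P(S_m - S_0 < -a). -/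
open Finset

private lemma telescope_icc (g : ℕ → ℝ) (m : ℕ) :
    ∑ i ∈ Finset.Icc 1 m, (g i - g (i - 1)) = g m - g 0 := by
  induction m with
  | zero => simp
  | succ n ih =>
      rw [Finset.sum_Icc_succ_top (by omega), ih]
      simp

private lemma hoeffding_sum {α : Type*} (A : Finset α) (x : α → ℝ) (cc l : ℝ)
    (hcc : 0 ≤ cc) (hb : ∀ τ ∈ A, |x τ| ≤ cc) (hz : ∑ τ ∈ A, x τ = 0) :
    ∑ τ ∈ A, Real.exp (l * x τ) ≤ A.card * Real.exp (l ^ 2 * cc ^ 2 / 2) := by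
  have hexp1 : (1:ℝ) ≤ Real.exp (l ^ 2 * cc ^ 2 / 2) := Real.one_le_exp (by positivity)
  rcases eq_or_lt_of_le hcc with h0 | hpos
  · have hx0 : ∀ τ ∈ A, x τ = 0 := fun τ hτ =>
      abs_eq_zero.mp (le_antisymm (h0 ▸ hb τ hτ) (abs_nonneg _))
    calc ∑ τ ∈ A, Real.exp (l * x τ) = ∑ τ ∈ A, 1 := by
          refine Finset.sum_congr rfl fun τ hτ => ?_
          rw [hx0 τ hτ]; simp
      _ = A.card := by simp
      _ ≤ A.card * Real.exp (l ^ 2 * cc ^ 2 / 2) := by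
          nlinarith [Nat.cast_nonneg (α := ℝ) A.card]
  · have key : ∀ τ ∈ A, Real.exp (l * x τ) ≤
        (cc - x τ)/(2*cc) * Real.exp (-(l*cc)) + (cc + x τ)/(2*cc) * Real.exp (l*cc) := by
      intro τ hτ
      have h1 := abs_le.mp (hb τ hτ)
      have hA : (0:ℝ) ≤ (cc - x τ)/(2*cc) := by
        apply div_nonneg (by linarith [h1.2]) (by linarith)
      have hB : (0:ℝ) ≤ (cc + x τ)/(2*cc) := by
        apply div_nonneg (by linarith [h1.1]) (by linarith)
      have hAB : (cc - x τ)/(2*cc) + (cc + x τ)/(2*cc) = 1 := by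
        field_simp; ring
      have := convexOn_exp.2 (Set.mem_univ (-(l*cc))) (Set.mem_univ (l*cc)) hA hB hAB
      simp only [smul_eq_mul] at this
      have harg : (cc - x τ)/(2*cc) * (-(l*cc)) + (cc + x τ)/(2*cc) * (l*cc) = l * x τ := by
        field_simp; ring
      rw [harg] at this
      exact this
    calc ∑ τ ∈ A, Real.exp (l * x τ)
        ≤ ∑ τ ∈ A, ((cc - x τ)/(2*cc) * Real.exp (-(l*cc))
            + (cc + x τ)/(2*cc) * Real.exp (l*cc)) := Finset.sum_le_sum key
      _ = A.card * Real.cosh (l * cc) := by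
          have s1 : ∑ τ ∈ A, (cc - x τ) = A.card * cc := by
            rw [Finset.sum_sub_distrib, hz, Finset.sum_const]; simp [mul_comm]
          have s2 : ∑ τ ∈ A, (cc + x τ) = A.card * cc := by
            rw [Finset.sum_add_distrib, hz, Finset.sum_const]; simp [mul_comm]
          rw [Finset.sum_add_distrib]
          simp only [div_mul_eq_mul_div]
          rw [← Finset.sum_div, ← Finset.sum_div, ← Finset.sum_mul, ← Finset.sum_mul,
            s1, s2, Real.cosh_eq]
          field_simp
          ring
      _ ≤ A.card * Real.exp (l ^ 2 * cc ^ 2 / 2) := by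
          have := Real.cosh_le_exp_half_sq (l * cc)
          have h2 : (l*cc)^2/2 = l^2*cc^2/2 := by ring
          rw [h2] at this
          exact mul_le_mul_of_nonneg_left this (Nat.cast_nonneg _)


def goodP (N : ℕ) (X : ℕ → Equiv.Perm (Fin N) → ℝ) (c : ℕ → ℝ) (i : ℕ)
    (σ : Equiv.Perm (Fin N)) : Prop :=
  ∀ τ : Equiv.Perm (Fin N), (∀ t : Fin N, (t : ℕ) < i - 1 → τ t = σ t) → |X i τ| ≤ c i

noncomputable instance goodP_dec (N : ℕ) (X : ℕ → Equiv.Perm (Fin N) → ℝ) (c : ℕ → ℝ) (i : ℕ) :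
    DecidablePred (goodP N X c i) := fun σ => by
  unfold goodP; infer_instance

noncomputable def Ytr (N : ℕ) (X : ℕ → Equiv.Perm (Fin N) → ℝ) (c : ℕ → ℝ) (i : ℕ)
    (σ : Equiv.Perm (Fin N)) : ℝ :=
  if goodP N X c i σ then X i σ else 0

noncomputable def Ttr (N : ℕ) (X : ℕ → Equiv.Perm (Fin N) → ℝ) (c : ℕ → ℝ) (k : ℕ)
    (σ : Equiv.Perm (Fin N)) : ℝ :=
  ∑ i ∈ Finset.Icc 1 k, Ytr N X c i σ

lemma goodP_inv {N : ℕ} {X : ℕ → Equiv.Perm (Fin N) → ℝ} {c : ℕ → ℝ} {i : ℕ}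
    {σ σ' : Equiv.Perm (Fin N)} (h : ∀ t : Fin N, (t : ℕ) < i - 1 → σ t = σ' t) :
    goodP N X c i σ ↔ goodP N X c i σ' := by
  constructor
  · intro hg ρ hρ
    exact hg ρ (fun t ht => (hρ t ht).trans (h t ht).symm)
  · intro hg ρ hρ
    exact hg ρ (fun t ht => (hρ t ht).trans (h t ht))

lemma Ttr_inv {N m : ℕ} {X : ℕ → Equiv.Perm (Fin N) → ℝ} {c : ℕ → ℝ}
    (hXmeas : ∀ i, 1 ≤ i → i ≤ m → ∀ σ τ : Equiv.Perm (Fin N),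
      (∀ t : Fin N, (t : ℕ) < i → σ t = τ t) → X i σ = X i τ)
    {k : ℕ} (hk : k ≤ m) {σ σ' : Equiv.Perm (Fin N)}
    (h : ∀ t : Fin N, (t : ℕ) < k → σ t = σ' t) :
    Ttr N X c k σ = Ttr N X c k σ' := by
  unfold Ttr
  refine Finset.sum_congr rfl fun i hi => ?_
  obtain ⟨hi1, hik⟩ := Finset.mem_Icc.mp hi
  have hagree : ∀ t : Fin N, (t : ℕ) < i → σ t = σ' t :=
    fun t ht => h t (lt_of_lt_of_le ht hik)
  unfold Ytr
  have hgi := goodP_inv (X := X) (c := c) (fun t ht => hagree t (by omega) : ∀ t : Fin N, (t : ℕ) < i - 1 → σ t = σ' t)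
  by_cases hg : goodP N X c i σ'
  · rw [if_pos (hgi.mpr hg), if_pos hg, hXmeas i hi1 (le_trans hik hk) σ σ' hagree]
  · rw [if_neg (fun hh => hg (hgi.mp hh)), if_neg hg]

private lemma moment (N m : ℕ) (X : ℕ → Equiv.Perm (Fin N) → ℝ) (c : ℕ → ℝ) (hc : ∀ i, 0 ≤ c i)
    (hXmeas : ∀ i, 1 ≤ i → i ≤ m → ∀ σ τ : Equiv.Perm (Fin N),
      (∀ t : Fin N, (t : ℕ) < i → σ t = τ t) → X i σ = X i τ)
    (hmart : ∀ i, 1 ≤ i → i ≤ m → ∀ σ : Equiv.Perm (Fin N),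
      (∑ τ ∈ Finset.univ.filter (fun τ : Equiv.Perm (Fin N) =>
          ∀ t : Fin N, (t : ℕ) < i - 1 → τ t = σ t), X i τ) = 0)
    (l : ℝ) :
    ∀ k, k ≤ m → ∑ σ : Equiv.Perm (Fin N), Real.exp (l * Ttr N X c k σ)
      ≤ (Fintype.card (Equiv.Perm (Fin N))) *
          Real.exp (l ^ 2 * (∑ i ∈ Finset.Icc 1 k, c i ^ 2) / 2) := by
  classical
  intro k
  induction k with
  | zero =>
      intro _
      have h0 : Finset.Icc 1 0 = (∅ : Finset ℕ) := by simp
      simp only [Ttr, h0, Finset.sum_empty, mul_zero, Real.exp_zero]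
      rw [Finset.sum_const, Finset.card_univ, nsmul_eq_mul, mul_one]
      simp
  | succ k ih =>
      intro hk1
      have hk : k ≤ m := by omega
      set κ : Equiv.Perm (Fin N) → (Fin N → Fin N) :=
        fun σ t => if (t : ℕ) < k then σ t else t with hκ
      have hoeff_const : (0:ℝ) ≤ Real.exp (l ^ 2 * c (k+1) ^ 2 / 2) := Real.exp_nonneg _
      have inner : ∀ b : Fin N → Fin N,
          ∑ σ ∈ Finset.univ.filter (fun σ => κ σ = b),
              Real.exp (l * Ttr N X c k σ) * Real.exp (l * Ytr N X c (k+1) σ)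
            ≤ Real.exp (l ^ 2 * c (k+1) ^ 2 / 2) *
              ∑ σ ∈ Finset.univ.filter (fun σ => κ σ = b), Real.exp (l * Ttr N X c k σ) := by
        intro b
        rcases (Finset.univ.filter (fun σ => κ σ = b)).eq_empty_or_nonempty with he | ⟨σ₀, hσ₀⟩
        · simp [he]
        · have hb : κ σ₀ = b := (Finset.mem_filter.mp hσ₀).2
          have hFb : Finset.univ.filter (fun σ => κ σ = b)
              = Finset.univ.filter (fun τ : Equiv.Perm (Fin N) =>
                  ∀ t : Fin N, (t : ℕ) < k → τ t = σ₀ t) := by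
            ext σ
            simp only [Finset.mem_filter, Finset.mem_univ, true_and]
            constructor
            · intro h t ht
              have := congrFun (h.trans hb.symm) t
              simpa [hκ, ht] using this
            · intro h
              rw [← hb]
              funext t
              by_cases ht : (t : ℕ) < k
              · simp [hκ, ht, h t ht]
              · simp [hκ, ht]
          rw [hFb]
          set A := Finset.univ.filter (fun τ : Equiv.Perm (Fin N) =>
            ∀ t : Fin N, (t : ℕ) < k → τ t = σ₀ t) with hA
          have hmemA : ∀ σ ∈ A, ∀ t : Fin N, (t : ℕ) < k → σ t = σ₀ t :=
            fun σ hσ => (Finset.mem_filter.mp hσ).2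
          have hTconst : ∀ σ ∈ A, Ttr N X c k σ = Ttr N X c k σ₀ :=
            fun σ hσ => Ttr_inv hXmeas hk (hmemA σ hσ)
          have hsumT : ∑ σ ∈ A, Real.exp (l * Ttr N X c k σ)
              = A.card * Real.exp (l * Ttr N X c k σ₀) := by
            rw [Finset.sum_congr rfl (fun σ hσ => by rw [hTconst σ hσ]), Finset.sum_const,
              nsmul_eq_mul]
          have step2 : ∑ σ ∈ A, Real.exp (l * Ytr N X c (k+1) σ)
              ≤ A.card * Real.exp (l ^ 2 * c (k+1) ^ 2 / 2) := by
            by_cases hg : goodP N X c (k+1) σ₀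
            · have hY : ∀ σ ∈ A, Ytr N X c (k+1) σ = X (k+1) σ := by
                intro σ hσ
                unfold Ytr
                rw [if_pos ((goodP_inv (fun t ht => hmemA σ hσ t (by omega))).mpr hg)]
              have hbound : ∀ σ ∈ A, |X (k+1) σ| ≤ c (k+1) :=
                fun σ hσ => hg σ (fun t ht => hmemA σ hσ t (by omega))
              have hzero : ∑ σ ∈ A, X (k+1) σ = 0 := by
                have := hmart (k+1) (by omega) hk1 σ₀
                simp only [Nat.add_sub_cancel] at this
                rw [hA]
                exact this
              calc ∑ σ ∈ A, Real.exp (l * Ytr N X c (k+1) σ)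
                  = ∑ σ ∈ A, Real.exp (l * X (k+1) σ) :=
                    Finset.sum_congr rfl (fun σ hσ => by rw [hY σ hσ])
                _ ≤ A.card * Real.exp (l ^ 2 * c (k+1) ^ 2 / 2) :=
                    hoeffding_sum A (X (k+1)) (c (k+1)) l (hc _) hbound hzero
            · have hY : ∀ σ ∈ A, Ytr N X c (k+1) σ = 0 := by
                intro σ hσ
                unfold Ytr
                rw [if_neg (fun hgσ =>
                  hg ((goodP_inv (fun t ht => hmemA σ hσ t (by omega))).mp hgσ))]
              calc ∑ σ ∈ A, Real.exp (l * Ytr N X c (k+1) σ)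
                  = ∑ σ ∈ A, 1 := Finset.sum_congr rfl (fun σ hσ => by rw [hY σ hσ]; simp)
                _ = A.card := by simp
                _ ≤ A.card * Real.exp (l ^ 2 * c (k+1) ^ 2 / 2) := by
                    nlinarith [Real.one_le_exp (by positivity : (0:ℝ) ≤ l ^ 2 * c (k+1) ^ 2 / 2),
                      Nat.cast_nonneg (α := ℝ) A.card]
          calc ∑ σ ∈ A, Real.exp (l * Ttr N X c k σ) * Real.exp (l * Ytr N X c (k+1) σ)
              = Real.exp (l * Ttr N X c k σ₀) * ∑ σ ∈ A, Real.exp (l * Ytr N X c (k+1) σ) := by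
                rw [Finset.mul_sum]
                exact Finset.sum_congr rfl (fun σ hσ => by rw [hTconst σ hσ])
            _ ≤ Real.exp (l * Ttr N X c k σ₀) * (A.card * Real.exp (l ^ 2 * c (k+1) ^ 2 / 2)) :=
                mul_le_mul_of_nonneg_left step2 (Real.exp_nonneg _)
            _ = Real.exp (l ^ 2 * c (k+1) ^ 2 / 2) * ∑ σ ∈ A, Real.exp (l * Ttr N X c k σ) := by
                rw [hsumT]; ring
      have expand : ∀ σ : Equiv.Perm (Fin N),
          Ttr N X c (k+1) σ = Ttr N X c k σ + Ytr N X c (k+1) σ := by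
        intro σ
        unfold Ttr
        rw [Finset.sum_Icc_succ_top (by omega : 1 ≤ k + 1)]
      calc ∑ σ : Equiv.Perm (Fin N), Real.exp (l * Ttr N X c (k+1) σ)
          = ∑ σ : Equiv.Perm (Fin N),
              Real.exp (l * Ttr N X c k σ) * Real.exp (l * Ytr N X c (k+1) σ) := by
            refine Finset.sum_congr rfl fun σ _ => ?_
            rw [expand σ, mul_add, Real.exp_add]
        _ = ∑ b : Fin N → Fin N, ∑ σ ∈ Finset.univ.filter (fun σ => κ σ = b),
              Real.exp (l * Ttr N X c k σ) * Real.exp (l * Ytr N X c (k+1) σ) :=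
            (Finset.sum_fiberwise _ _ _).symm
        _ ≤ ∑ b : Fin N → Fin N, Real.exp (l ^ 2 * c (k+1) ^ 2 / 2) *
              ∑ σ ∈ Finset.univ.filter (fun σ => κ σ = b), Real.exp (l * Ttr N X c k σ) :=
            Finset.sum_le_sum (fun b _ => inner b)
        _ = Real.exp (l ^ 2 * c (k+1) ^ 2 / 2) *
              ∑ σ : Equiv.Perm (Fin N), Real.exp (l * Ttr N X c k σ) := by
            rw [← Finset.mul_sum, Finset.sum_fiberwise]
        _ ≤ Real.exp (l ^ 2 * c (k+1) ^ 2 / 2) *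
              ((Fintype.card (Equiv.Perm (Fin N))) *
                Real.exp (l ^ 2 * (∑ i ∈ Finset.Icc 1 k, c i ^ 2) / 2)) :=
            mul_le_mul_of_nonneg_left (ih hk) (Real.exp_nonneg _)
        _ = (Fintype.card (Equiv.Perm (Fin N))) *
              Real.exp (l ^ 2 * (∑ i ∈ Finset.Icc 1 (k+1), c i ^ 2) / 2) := by
            rw [Finset.sum_Icc_succ_top (by omega : 1 ≤ k + 1)]
            rw [show l ^ 2 * ((∑ i ∈ Finset.Icc 1 k, c i ^ 2) + c (k+1) ^ 2) / 2
              = l ^ 2 * (∑ i ∈ Finset.Icc 1 k, c i ^ 2) / 2 + l ^ 2 * c (k+1) ^ 2 / 2 by ring]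
            rw [Real.exp_add]
            ring
private lemma bad_count (N m : ℕ) (hm : m ≤ N) (X : ℕ → Equiv.Perm (Fin N) → ℝ) (c : ℕ → ℝ)
    (hXmeas : ∀ i, 1 ≤ i → i ≤ m → ∀ σ τ : Equiv.Perm (Fin N),
      (∀ t : Fin N, (t : ℕ) < i → σ t = τ t) → X i σ = X i τ)
    (i : ℕ) (hi1 : 1 ≤ i) (him : i ≤ m) :
    (Finset.univ.filter (fun σ : Equiv.Perm (Fin N) => ¬ goodP N X c i σ)).card
      ≤ N * (Finset.univ.filter (fun σ : Equiv.Perm (Fin N) => |X i σ| > c i)).card := by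
  classical
  have hN : 0 < N := by omega
  have hi1N : i - 1 < N := by omega
  set k₀ : Fin N := ⟨i - 1, hi1N⟩ with hk₀
  set E := Finset.univ.filter (fun σ : Equiv.Perm (Fin N) => |X i σ| > c i) with hE
  set B := Finset.univ.filter (fun σ : Equiv.Perm (Fin N) => ¬ goodP N X c i σ) with hB
  set w : Equiv.Perm (Fin N) → Equiv.Perm (Fin N) := fun σ =>
    if h : ∃ τ : Equiv.Perm (Fin N),
        (∀ t : Fin N, (t : ℕ) < i - 1 → τ t = σ t) ∧ c i < |X i τ| then h.choose else σ
    with hwdef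
  have hw : ∀ σ ∈ B, (∀ t : Fin N, (t : ℕ) < i - 1 → w σ t = σ t) ∧ c i < |X i (w σ)| := by
    intro σ hσ
    have hng := (Finset.mem_filter.mp hσ).2
    have hex : ∃ τ : Equiv.Perm (Fin N),
        (∀ t : Fin N, (t : ℕ) < i - 1 → τ t = σ t) ∧ c i < |X i τ| := by
      unfold goodP at hng
      push_neg at hng
      exact hng
    simp only [hwdef, dif_pos hex]
    exact hex.choose_spec
  have hcard : B.card ≤ ((Finset.univ : Finset (Fin N)) ×ˢ E).card := by
    apply Finset.card_le_card_of_injOn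
      (fun σ => (σ⁻¹ (w σ k₀), σ * Equiv.swap (σ⁻¹ (w σ k₀)) k₀))
    · intro σ hσ
      obtain ⟨hagree, hbig⟩ := hw σ hσ
      set j : Fin N := σ⁻¹ (w σ k₀) with hj
      have hσj : σ j = w σ k₀ := Equiv.apply_symm_apply σ (w σ k₀)
      have hkey : ∀ t : Fin N, (t : ℕ) < i → (σ * Equiv.swap j k₀) t = w σ t := by
        intro t ht
        rcases Nat.lt_or_ge (t : ℕ) (i - 1) with ht1 | ht1
        · have htk : t ≠ k₀ := by
            intro h; rw [h] at ht1; simp [hk₀] at ht1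
          have htj : t ≠ j := by
            intro h
            have h1 : σ t = w σ k₀ := by rw [h, hσj]
            have h2 : w σ t = σ t := hagree t ht1
            have : w σ t = w σ k₀ := by rw [h2, h1]
            have := (w σ).injective this
            exact htk this
          rw [Equiv.Perm.mul_apply, Equiv.swap_apply_of_ne_of_ne htj htk]
          exact (hagree t ht1).symm
        · have htk : t = k₀ := by
            apply Fin.ext
            simp only [hk₀]
            omega
          rw [htk, Equiv.Perm.mul_apply, Equiv.swap_apply_right, hσj]
      have hXeq : X i (σ * Equiv.swap j k₀) = X i (w σ) :=
        hXmeas i hi1 him _ _ hkey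
      refine Finset.mem_product.mpr ⟨Finset.mem_univ _, ?_⟩
      rw [hE]
      refine Finset.mem_filter.mpr ⟨Finset.mem_univ _, ?_⟩
      rw [hXeq]
      exact hbig
    · intro σ₁ h₁ σ₂ h₂ heq
      simp only [Prod.mk.injEq] at heq
      obtain ⟨hj, hp⟩ := heq
      rw [hj] at hp
      exact mul_right_cancel hp
  calc B.card ≤ ((Finset.univ : Finset (Fin N)) ×ˢ E).card := hcard
    _ = N * E.card := by
        rw [Finset.card_product, Finset.card_univ, Fintype.card_fin]
private lemma azuma_aux (N m : ℕ) (hm : m ≤ N)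
    (S : ℕ → Equiv.Perm (Fin N) → ℝ)
    (hadapted : ∀ i, i ≤ m → ∀ σ τ : Equiv.Perm (Fin N),
      (∀ t : Fin N, (t : ℕ) < i → σ t = τ t) → S i σ = S i τ)
    (X : ℕ → Equiv.Perm (Fin N) → ℝ)
    (hX : ∀ i σ, X i σ = S i σ - S (i - 1) σ)
    (hmart : ∀ i, 1 ≤ i → i ≤ m → ∀ σ : Equiv.Perm (Fin N),
      (∑ τ ∈ Finset.univ.filter (fun τ : Equiv.Perm (Fin N) =>
          ∀ t : Fin N, (t : ℕ) < i - 1 → τ t = σ t), X i τ) = 0)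
    (c : ℕ → ℝ) (hc : ∀ i, 0 ≤ c i) (a : ℝ) (ha : 0 < a) :
    ((Finset.univ.filter (fun σ : Equiv.Perm (Fin N) => S m σ - S 0 σ > a)).card : ℝ)
          / (Fintype.card (Equiv.Perm (Fin N)))
        ≤ Real.exp (-a ^ 2 / (2 * ∑ i ∈ Finset.Icc 1 m, (c i) ^ 2))
          + N * ∑ i ∈ Finset.Icc 1 m,
              ((Finset.univ.filter (fun σ : Equiv.Perm (Fin N) => |X i σ| > c i)).card : ℝ)
                / (Fintype.card (Equiv.Perm (Fin N))) := by
  classical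
  have hXmeas : ∀ i, 1 ≤ i → i ≤ m → ∀ σ τ : Equiv.Perm (Fin N),
      (∀ t : Fin N, (t : ℕ) < i → σ t = τ t) → X i σ = X i τ := by
    intro i h1 h2 σ τ hag
    rw [hX, hX, hadapted i h2 σ τ hag,
      hadapted (i - 1) (by omega) σ τ (fun t ht => hag t (by omega))]
  set K : ℝ := ((Fintype.card (Equiv.Perm (Fin N)) : ℕ) : ℝ) with hKdef
  have hK : 0 < K := by
    rw [hKdef]
    exact_mod_cast Fintype.card_pos
  set V2 : ℝ := ∑ i ∈ Finset.Icc 1 m, c i ^ 2 with hV2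
  have hV2nn : (0:ℝ) ≤ V2 := Finset.sum_nonneg fun i _ => sq_nonneg _
  -- event inclusion
  have hincl : Finset.univ.filter (fun σ : Equiv.Perm (Fin N) => S m σ - S 0 σ > a)
      ⊆ (Finset.univ.filter (fun σ : Equiv.Perm (Fin N) => Ttr N X c m σ > a))
        ∪ (Finset.Icc 1 m).biUnion (fun i =>
            Finset.univ.filter (fun σ : Equiv.Perm (Fin N) => ¬ goodP N X c i σ)) := by
    intro σ hσ
    have hSσ := (Finset.mem_filter.mp hσ).2
    by_cases hg : ∀ i ∈ Finset.Icc 1 m, goodP N X c i σ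
    · apply Finset.mem_union_left
      refine Finset.mem_filter.mpr ⟨Finset.mem_univ _, ?_⟩
      have hTeq : Ttr N X c m σ = S m σ - S 0 σ := by
        unfold Ttr
        rw [show S m σ - S 0 σ = ∑ i ∈ Finset.Icc 1 m, (S i σ - S (i - 1) σ) from
          (telescope_icc (fun i => S i σ) m).symm]
        refine Finset.sum_congr rfl fun i hi => ?_
        unfold Ytr
        rw [if_pos (hg i hi), hX]
      rw [hTeq]
      exact hSσ
    · push_neg at hg
      obtain ⟨i, hi, hgi⟩ := hg
      exact Finset.mem_union_right _ (Finset.mem_biUnion.mpr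
        ⟨i, hi, Finset.mem_filter.mpr ⟨Finset.mem_univ _, hgi⟩⟩)
  have hcard1 : ((Finset.univ.filter (fun σ : Equiv.Perm (Fin N) => S m σ - S 0 σ > a)).card : ℝ)
      ≤ ((Finset.univ.filter (fun σ : Equiv.Perm (Fin N) => Ttr N X c m σ > a)).card : ℝ)
        + ∑ i ∈ Finset.Icc 1 m,
            ((Finset.univ.filter (fun σ : Equiv.Perm (Fin N) => ¬ goodP N X c i σ)).card : ℝ) := by
    have h1 := Finset.card_le_card hincl
    have h2 := Finset.card_union_le
      (Finset.univ.filter (fun σ : Equiv.Perm (Fin N) => Ttr N X c m σ > a))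
      ((Finset.Icc 1 m).biUnion (fun i =>
        Finset.univ.filter (fun σ : Equiv.Perm (Fin N) => ¬ goodP N X c i σ)))
    have h3 := Finset.card_biUnion_le (s := Finset.Icc 1 m)
      (t := fun i => Finset.univ.filter (fun σ : Equiv.Perm (Fin N) => ¬ goodP N X c i σ))
    have := le_trans h1 (le_trans h2 (Nat.add_le_add_left h3 _))
    exact_mod_cast this
  -- Chernoff bound for the truncated sum
  have chern : ((Finset.univ.filter (fun σ : Equiv.Perm (Fin N) => Ttr N X c m σ > a)).card : ℝ)
      ≤ K * Real.exp (-a ^ 2 / (2 * V2)) := by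
    rcases eq_or_lt_of_le hV2nn with h0 | hpos
    · have hz : -a ^ 2 / (2 * V2) = 0 := by rw [← h0]; norm_num
      rw [hz, Real.exp_zero, mul_one, hKdef]
      have := Finset.card_filter_le Finset.univ
        (fun σ : Equiv.Perm (Fin N) => Ttr N X c m σ > a)
      rw [Finset.card_univ] at this
      exact_mod_cast this
    · set l : ℝ := a / V2 with hl
      have hlpos : 0 < l := div_pos ha hpos
      calc ((Finset.univ.filter (fun σ : Equiv.Perm (Fin N) => Ttr N X c m σ > a)).card : ℝ)
          = ∑ _σ ∈ Finset.univ.filter (fun σ : Equiv.Perm (Fin N) => Ttr N X c m σ > a),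
              (1:ℝ) := by simp
        _ ≤ ∑ σ ∈ Finset.univ.filter (fun σ : Equiv.Perm (Fin N) => Ttr N X c m σ > a),
              Real.exp (l * Ttr N X c m σ - l * a) := by
            refine Finset.sum_le_sum fun σ hσ => ?_
            have hT := (Finset.mem_filter.mp hσ).2
            have : (0:ℝ) ≤ l * Ttr N X c m σ - l * a := by nlinarith
            exact Real.one_le_exp this
        _ ≤ ∑ σ : Equiv.Perm (Fin N), Real.exp (l * Ttr N X c m σ - l * a) :=
            Finset.sum_le_sum_of_subset_of_nonneg (Finset.filter_subset _ _)
              (fun σ _ _ => Real.exp_nonneg _)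
        _ = (∑ σ : Equiv.Perm (Fin N), Real.exp (l * Ttr N X c m σ)) * Real.exp (-(l * a)) := by
            rw [Finset.sum_mul]
            refine Finset.sum_congr rfl fun σ _ => ?_
            rw [← Real.exp_add]
            ring_nf
        _ ≤ (K * Real.exp (l ^ 2 * V2 / 2)) * Real.exp (-(l * a)) :=
            mul_le_mul_of_nonneg_right (moment N m X c hc hXmeas hmart l m le_rfl)
              (Real.exp_nonneg _)
        _ = K * Real.exp (-a ^ 2 / (2 * V2)) := by
            rw [mul_assoc, ← Real.exp_add]
            congr 1
            rw [hl]
            field_simp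
            ring
  -- bad-atom counting
  have hbad : ∀ i ∈ Finset.Icc 1 m,
      ((Finset.univ.filter (fun σ : Equiv.Perm (Fin N) => ¬ goodP N X c i σ)).card : ℝ)
        ≤ N * ((Finset.univ.filter (fun σ : Equiv.Perm (Fin N) => |X i σ| > c i)).card : ℝ) := by
    intro i hi
    obtain ⟨h1, h2⟩ := Finset.mem_Icc.mp hi
    exact_mod_cast bad_count N m hm X c hXmeas i h1 h2
  have hbadsum : ∑ i ∈ Finset.Icc 1 m,
        ((Finset.univ.filter (fun σ : Equiv.Perm (Fin N) => ¬ goodP N X c i σ)).card : ℝ)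
      ≤ N * ∑ i ∈ Finset.Icc 1 m,
          ((Finset.univ.filter (fun σ : Equiv.Perm (Fin N) => |X i σ| > c i)).card : ℝ) := by
    rw [Finset.mul_sum]
    exact Finset.sum_le_sum hbad
  -- assemble
  rw [div_le_iff₀ hK]
  have hsumdiv : ∑ i ∈ Finset.Icc 1 m,
        ((Finset.univ.filter (fun σ : Equiv.Perm (Fin N) => |X i σ| > c i)).card : ℝ) / K
      = (∑ i ∈ Finset.Icc 1 m,
          ((Finset.univ.filter (fun σ : Equiv.Perm (Fin N) => |X i σ| > c i)).card : ℝ)) / K :=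
    (Finset.sum_div _ _ _).symm
  rw [hsumdiv]
  have hexpand : (Real.exp (-a ^ 2 / (2 * V2)) + N * ((∑ i ∈ Finset.Icc 1 m,
        ((Finset.univ.filter (fun σ : Equiv.Perm (Fin N) => |X i σ| > c i)).card : ℝ)) / K)) * K
      = K * Real.exp (-a ^ 2 / (2 * V2)) + N * ∑ i ∈ Finset.Icc 1 m,
          ((Finset.univ.filter (fun σ : Equiv.Perm (Fin N) => |X i σ| > c i)).card : ℝ) := by
    rw [add_mul, mul_assoc, div_mul_cancel₀ _ hK.ne']
    ring
  rw [hexpand]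
  linarith


open Finset in
/-- Azuma–Hoeffding with truncation, for martingales adapted to the filtration of
the nested random-set process on `[N]` (generated by a uniformly random
permutation; knowing `B_0,…,B_i` is the same as knowing the first `i` values of
the permutation).  If `(S_i)_{i=0}^m` is adapted (each `S_i` depends only on the
first `i` values) and is a martingale (each increment `X_i = S_i - S_{i-1}` has
zero conditional mean given the first `i-1` values), then for nonnegative
`c_1,…,c_m` and every `a > 0`:
`P(S_m - S_0 > a) ≤ exp(-a²/(2Σ c_i²)) + N·Σ_i P(|X_i| > c_i)`,
and the same bound holds for `P(S_m - S_0 < -a)`. -/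
theorem azuma_hoeffding_truncated (N m : ℕ) (hm : m ≤ N)
    (S : ℕ → Equiv.Perm (Fin N) → ℝ)
    (hadapted : ∀ i, i ≤ m → ∀ σ τ : Equiv.Perm (Fin N),
      (∀ t : Fin N, (t : ℕ) < i → σ t = τ t) → S i σ = S i τ)
    (X : ℕ → Equiv.Perm (Fin N) → ℝ)
    (hX : ∀ i σ, X i σ = S i σ - S (i - 1) σ)
    (hmart : ∀ i, 1 ≤ i → i ≤ m → ∀ σ : Equiv.Perm (Fin N),
      (∑ τ ∈ Finset.univ.filter (fun τ : Equiv.Perm (Fin N) =>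
          ∀ t : Fin N, (t : ℕ) < i - 1 → τ t = σ t), X i τ) = 0)
    (c : ℕ → ℝ) (hc : ∀ i, 0 ≤ c i) (a : ℝ) (ha : 0 < a) :
    (((Finset.univ.filter (fun σ : Equiv.Perm (Fin N) => S m σ - S 0 σ > a)).card : ℝ)
          / (Fintype.card (Equiv.Perm (Fin N)))
        ≤ Real.exp (-a ^ 2 / (2 * ∑ i ∈ Finset.Icc 1 m, (c i) ^ 2))
          + N * ∑ i ∈ Finset.Icc 1 m,
              ((Finset.univ.filter (fun σ : Equiv.Perm (Fin N) => |X i σ| > c i)).card : ℝ)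
                / (Fintype.card (Equiv.Perm (Fin N)))) ∧
    (((Finset.univ.filter (fun σ : Equiv.Perm (Fin N) => S m σ - S 0 σ < -a)).card : ℝ)
          / (Fintype.card (Equiv.Perm (Fin N)))
        ≤ Real.exp (-a ^ 2 / (2 * ∑ i ∈ Finset.Icc 1 m, (c i) ^ 2))
          + N * ∑ i ∈ Finset.Icc 1 m,
              ((Finset.univ.filter (fun σ : Equiv.Perm (Fin N) => |X i σ| > c i)).card : ℝ)
                / (Fintype.card (Equiv.Perm (Fin N)))) := by
  constructor
  · exact azuma_aux N m hm S hadapted X hX hmart c hc a ha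
  · have h := azuma_aux N m hm (fun i σ => -S i σ)
      (fun i him σ τ hag => by
        show -S i σ = -S i τ
        rw [hadapted i him σ τ hag])
      (fun i σ => -X i σ)
      (fun i σ => by
        show -X i σ = -S i σ - -S (i - 1) σ
        rw [hX]; ring)
      (fun i h1 h2 σ => by
        show (∑ τ ∈ Finset.univ.filter (fun τ : Equiv.Perm (Fin N) =>
          ∀ t : Fin N, (t : ℕ) < i - 1 → τ t = σ t), -X i τ) = 0
        rw [Finset.sum_neg_distrib, hmart i h1 h2 σ, neg_zero])
      c hc a ha
    have e1 : Finset.univ.filter (fun σ : Equiv.Perm (Fin N) => -S m σ - -S 0 σ > a)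
        = Finset.univ.filter (fun σ : Equiv.Perm (Fin N) => S m σ - S 0 σ < -a) := by
      apply Finset.filter_congr
      intro σ _
      constructor <;> intro <;> linarith
    have e2 : ∀ i, Finset.univ.filter (fun σ : Equiv.Perm (Fin N) => |-X i σ| > c i)
        = Finset.univ.filter (fun σ : Equiv.Perm (Fin N) => |X i σ| > c i) := by
      intro i
      apply Finset.filter_congr
      intro σ _
      rw [abs_neg]
    rw [e1] at h
    simp only [e2] at h
    exact h
end
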